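/- Let p : G̃ → G be a continuous surjective group homomorphism of topological groups which is a covering map, where G̃ is path-connected and simply connected and G is path-connected. Let H be a subgroup of G which is path-connected in the subspace topology and such that the inclusion H ↪ G induces a surjective homomorphism π₁(H, 1) → π₁(G, 1), and let H̃ denote the path component of the identity in p⁻¹(H). Suppose G̃ acts continuously on a topological space F and every element of ker(p) ∩ H̃ acts as the identity on F. Then every element of ker(p) acts as the identity on F, and consequently there is a (unique) continuous action of G on F satisfying g̃ · x = p(g̃) · x for all g̃ ∈ G̃ and x ∈ F. -/

import Mathlib

open Set Topology

section Lifting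

variable {E X : Type*} [TopologicalSpace E] [TopologicalSpace X] {p : E → X}

theorem glueOn {α β : Type*} [TopologicalSpace α] [TopologicalSpace β]
    {f g : α → β} {s t : Set α} [∀ x, Decidable (x ∈ s)] (hs : IsClosed s) (ht : IsClosed t)
    (hf : ContinuousOn f s) (hg : ContinuousOn g t) (heq : Set.EqOn f g (s ∩ t)) :
    ContinuousOn (fun x => if x ∈ s then f x else g x) (s ∪ t) := by
  intro x hx
  have hFs : Set.EqOn (fun x => if x ∈ s then f x else g x) f s := fun y hy => if_pos hy
  have hFt : Set.EqOn (fun x => if x ∈ s then f x else g x) g t := fun y hy => by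
    by_cases h : y ∈ s
    · show (if y ∈ s then f y else g y) = g y
      rw [if_pos h]; exact heq ⟨h, hy⟩
    · show (if y ∈ s then f y else g y) = g y
      rw [if_neg h]
  by_cases hxs : x ∈ s
  · by_cases hxt : x ∈ t
    · exact ContinuousWithinAt.union
        ((hf x hxs).congr hFs (hFs hxs)) ((hg x hxt).congr hFt (hFt hxt))
    · exact (continuousWithinAt_inter (ht.isOpen_compl.mem_nhds hxt)).mp
        (((hf x hxs).mono fun y hy => hy.1.resolve_right hy.2).congr
          (fun y hy => hFs (hy.1.resolve_right hy.2)) (hFs hxs))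
  · have hxt : x ∈ t := hx.resolve_left hxs
    exact (continuousWithinAt_inter (hs.isOpen_compl.mem_nhds hxs)).mp
      (((hg x hxt).mono fun y hy => hy.1.resolve_left hy.2).congr
        (fun y hy => hFt (hy.1.resolve_left hy.2)) (hFt hxt))

/-- The base set of the chosen evenly covered neighbourhood of `x`. -/
def IsCoveringMap.cbase (hp : IsCoveringMap p) (x : X) : Set X := (hp x).2.choose

open Classical in
theorem IsCoveringMap.extend_lift (hp : IsCoveringMap p) {A : Type*} [TopologicalSpace A]
    {K : A → X} {S Q : Set A}
    (hS : IsClosed S) (hQ : IsClosed Q) (hconn : IsPreconnected (S ∩ Q))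
    {z₀ : A} (hz₀ : z₀ ∈ S ∩ Q) (hK : Continuous K)
    (hT : ∃ x : X, ∀ z ∈ Q, K z ∈ hp.cbase x)
    {L : A → E} (hLc : ContinuousOn L S) (hLp : ∀ z ∈ S, p (L z) = K z) :
    ∃ L' : A → E, ContinuousOn L' (S ∪ Q) ∧ (∀ z ∈ S ∪ Q, p (L' z) = K z) ∧
      Set.EqOn L' L S := by
  classical
  obtain ⟨x, hx⟩ := hT
  haveI : Nonempty (p ⁻¹' {x}) := ⟨((hp x).2.choose_spec.2.2.2.choose ⟨L z₀, show p (L z₀) ∈ hp.cbase x by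
    rw [hLp z₀ hz₀.1]; exact hx z₀ hz₀.2⟩).2⟩
  set T := (hp x).toTrivialization with hT
  set c : p ⁻¹' {x} := (T (L z₀)).2 with hc
  set M : A → E := fun z => T.toPartialHomeomorph.symm (K z, c) with hM
  have hKz₀ : K z₀ ∈ T.baseSet := hx z₀ hz₀.2
  have hLz₀src : L z₀ ∈ T.source := T.mem_source.2 (by rw [hLp z₀ hz₀.1]; exact hKz₀)
  have hMp : ∀ z ∈ Q, p (M z) = K z := fun z hz =>
    T.proj_symm_apply (T.mem_target.2 (hx z hz))
  have hMc : ContinuousOn M Q := by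
    apply T.toPartialHomeomorph.continuousOn_symm.comp
      ((hK.prodMk continuous_const).continuousOn)
    intro z hz
    exact T.mem_target.2 (hx z hz)
  have hMz₀ : M z₀ = L z₀ := by
    have h1 : ((K z₀ : X), c) = T (L z₀) := by
      refine Prod.ext ?_ rfl
      show K z₀ = (T (L z₀)).1
      rw [T.coe_fst hLz₀src, hLp z₀ hz₀.1]
    show T.toPartialHomeomorph.symm (K z₀, c) = L z₀
    rw [h1]
    exact T.toPartialHomeomorph.left_inv hLz₀src
  have heq : Set.EqOn L M (S ∩ Q) :=
    hp.eqOn_of_comp_eqOn hconn (hLc.mono inter_subset_left) (hMc.mono inter_subset_right)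
      (fun z hz => by
        show p (L z) = p (M z)
        rw [hLp z hz.1, hMp z hz.2]) hz₀ hMz₀.symm
  refine ⟨fun z => if z ∈ S then L z else M z,
    glueOn hS hQ hLc hMc heq, fun z hz => ?_, fun z hz => if_pos hz⟩
  show p (if z ∈ S then L z else M z) = K z
  by_cases h : z ∈ S
  · rw [if_pos h]; exact hLp z h
  · rw [if_neg h]; exact hMp z (hz.resolve_left h)

end Lifting

section Interval

variable {E X : Type*} [TopologicalSpace E] [TopologicalSpace X] {p : E → X}

theorem IsCoveringMap.interval_lift (hp : IsCoveringMap p) {k : ℝ → X} (hk : Continuous k)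
    (e : E) (he : p e = k 0) :
    ∃ ℓ : ℝ → E, ContinuousOn ℓ (Icc 0 1) ∧ (∀ t ∈ Icc (0:ℝ) 1, p (ℓ t) = k t) ∧ ℓ 0 = e := by
  obtain ⟨δ, hδ0, hδ⟩ := lebesgue_number_lemma_of_metric (isCompact_Icc (a := (0:ℝ)) (b := 1))
    (c := fun x : X => k ⁻¹' hp.cbase x)
    (fun x => (hp x).2.choose_spec.2.1.preimage hk)
    (fun z _ => mem_iUnion.2 ⟨k z, (hp (k z)).2.choose_spec.1⟩)
  obtain ⟨m, hm⟩ := exists_nat_one_div_lt hδ0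
  set n : ℕ := m + 1 with hn
  have hn' : (0:ℝ) < n := by positivity
  have h1n : (1:ℝ)/n < δ := by rw [hn]; push_cast; exact_mod_cast hm
  set u : ℕ → ℝ := fun i => (i:ℝ)/n with hu
  have hu0 : u 0 = 0 := by simp [hu]
  have hun : u n = 1 := by rw [hu]; exact div_self hn'.ne'
  have humono : ∀ i : ℕ, u i ≤ u (i+1) := fun i => by
    rw [hu, div_le_div_iff_of_pos_right hn']
    exact_mod_cast Nat.le_succ i
  have hu_nonneg : ∀ i : ℕ, 0 ≤ u i := fun i => by positivity
  have hu_le_one : ∀ i : ℕ, i ≤ n → u i ≤ 1 := fun i hi => by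
    rw [hu]; rw [div_le_one hn']; exact_mod_cast hi
  have hseg : ∀ i : ℕ, i < n →
      ∃ x : X, ∀ t ∈ Icc (u i) (u (i+1)), k t ∈ hp.cbase x := by
    intro i hi
    obtain ⟨x, hx⟩ := hδ (u i) ⟨hu_nonneg i, hu_le_one i hi.le⟩
    refine ⟨x, fun t ht => hx ?_⟩
    rw [Metric.mem_ball, Real.dist_eq]
    have h2 : u (i+1) - u i = 1/n := by rw [hu]; push_cast; ring
    have := ht.1; have := ht.2
    rw [abs_lt]; constructor <;> [linarith; linarith]
  have main : ∀ i : ℕ, i ≤ n → ∃ ℓ : ℝ → E, ContinuousOn ℓ (Icc 0 (u i)) ∧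
      (∀ t ∈ Icc (0:ℝ) (u i), p (ℓ t) = k t) ∧ ℓ 0 = e := by
    intro i
    induction i with
    | zero =>
      exact fun _ => ⟨fun _ => e, continuousOn_const, fun t ht => by
        rw [hu0] at ht
        obtain rfl : t = 0 := le_antisymm ht.2 ht.1
        exact he, rfl⟩
    | succ i ih =>
      intro hi
      obtain ⟨ℓ, hc, hpl, h0⟩ := ih (Nat.le_of_succ_le hi)
      have hinter : Icc (0:ℝ) (u i) ∩ Icc (u i) (u (i+1)) = {u i} := by
        rw [Icc_inter_Icc, max_eq_right (hu_nonneg i), min_eq_left (humono i), Icc_self]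
      obtain ⟨L', hc', hp', heqn⟩ := hp.extend_lift (K := k)
        (S := Icc 0 (u i)) (Q := Icc (u i) (u (i+1)))
        isClosed_Icc isClosed_Icc
        (by rw [hinter]; exact isPreconnected_singleton)
        (z₀ := u i) ⟨⟨hu_nonneg i, le_refl _⟩, ⟨le_refl _, humono i⟩⟩ hk
        (hseg i hi) hc hpl
      rw [Icc_union_Icc_eq_Icc (hu_nonneg i) (humono i)] at hc' hp'
      exact ⟨L', hc', hp', by rw [heqn ⟨le_refl 0, hu_nonneg i⟩]; exact h0⟩
  obtain ⟨ℓ, h1, h2, h3⟩ := main n le_rfl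
  rw [hun] at h1 h2
  exact ⟨ℓ, h1, h2, h3⟩

end Interval

section Square

variable {E X : Type*} [TopologicalSpace E] [TopologicalSpace X] {p : E → X}

theorem IsCoveringMap.square_lift (hp : IsCoveringMap p) {K : ℝ × ℝ → X} (hK : Continuous K)
    (e : E) (he : p e = K (0, 0)) :
    ∃ L : ℝ × ℝ → E, ContinuousOn L (Icc 0 1 ×ˢ Icc 0 1) ∧
      (∀ z ∈ (Icc (0:ℝ) 1 ×ˢ Icc (0:ℝ) 1), p (L z) = K z) ∧ L (0, 0) = e := by
  obtain ⟨δ, hδ0, hδ⟩ := lebesgue_number_lemma_of_metric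
    ((isCompact_Icc (a := (0:ℝ)) (b := 1)).prod (isCompact_Icc (a := (0:ℝ)) (b := 1)))
    (c := fun x : X => K ⁻¹' hp.cbase x)
    (fun x => (hp x).2.choose_spec.2.1.preimage hK)
    (fun z _ => mem_iUnion.2 ⟨K z, (hp (K z)).2.choose_spec.1⟩)
  obtain ⟨m, hm⟩ := exists_nat_one_div_lt hδ0
  set n : ℕ := m + 1 with hn
  have hn' : (0:ℝ) < n := by positivity
  have h1n : (1:ℝ)/n < δ := by rw [hn]; push_cast; exact_mod_cast hm
  set u : ℕ → ℝ := fun i => (i:ℝ)/n with hu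
  have hu0 : u 0 = 0 := by simp [hu]
  have hun : u n = 1 := by rw [hu]; exact div_self hn'.ne'
  have humono : ∀ i : ℕ, u i ≤ u (i+1) := fun i => by
    rw [hu, div_le_div_iff_of_pos_right hn']
    exact_mod_cast Nat.le_succ i
  have hu_nonneg : ∀ i : ℕ, 0 ≤ u i := fun i => by positivity
  have hu_le_one : ∀ i : ℕ, i ≤ n → u i ≤ 1 := fun i hi => by
    rw [hu, div_le_one hn']; exact_mod_cast hi
  have hudiff : ∀ i : ℕ, u (i+1) - u i = 1/n := fun i => by rw [hu]; push_cast; ring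
  set Qs : ℕ → ℕ → Set (ℝ × ℝ) :=
    fun j i => Icc (u i) (u (i+1)) ×ˢ Icc (u j) (u (j+1)) with hQs
  have hsq : ∀ j i : ℕ, j < n → i < n →
      ∃ x : X, ∀ z ∈ Qs j i, K z ∈ hp.cbase x := by
    intro j i hj hi
    obtain ⟨x, hx⟩ := hδ (u i, u j)
      ⟨⟨hu_nonneg i, hu_le_one i hi.le⟩, ⟨hu_nonneg j, hu_le_one j hj.le⟩⟩
    refine ⟨x, fun z hz => hx ?_⟩
    rw [Metric.mem_ball, Prod.dist_eq]
    have h1 := hz.1.1; have h2 := hz.1.2; have h3 := hz.2.1; have h4 := hz.2.2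
    have d1 := hudiff i; have d2 := hudiff j
    refine max_lt ?_ ?_ <;> rw [Real.dist_eq, abs_lt] <;> constructor <;> linarith
  set Edge : Set (ℝ × ℝ) :=
    (Icc (0:ℝ) 1 ×ˢ ({0} : Set ℝ)) ∪ (({0} : Set ℝ) ×ˢ Icc (0:ℝ) 1) with hEdge
  set B : ℕ → Set (ℝ × ℝ) := fun j => Icc (0:ℝ) 1 ×ˢ Icc 0 (u j) with hB
  set C : ℕ → ℕ → Set (ℝ × ℝ) := fun j i => Icc (0:ℝ) (u i) ×ˢ Icc (u j) (u (j+1)) with hC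
  have hEdgeClosed : IsClosed Edge :=
    ((isClosed_Icc.prod isClosed_singleton).union (isClosed_singleton.prod isClosed_Icc))
  have h00Edge : ((0:ℝ), (0:ℝ)) ∈ Edge := Or.inl ⟨⟨le_refl 0, zero_le_one⟩, rfl⟩
  -- lift on the edge
  have edge_lift : ∃ L : ℝ × ℝ → E, ContinuousOn L Edge ∧
      (∀ z ∈ Edge, p (L z) = K z) ∧ L (0, 0) = e := by
    obtain ⟨ℓ₁, hc₁, hp₁, h0₁⟩ := hp.interval_lift (k := fun t => K (t, 0))
      (hK.comp (continuous_id.prodMk continuous_const)) e he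
    obtain ⟨ℓ₂, hc₂, hp₂, h0₂⟩ := hp.interval_lift (k := fun t => K (0, t))
      (hK.comp (continuous_const.prodMk continuous_id)) e he
    refine ⟨fun z => if z ∈ Icc (0:ℝ) 1 ×ˢ ({0} : Set ℝ) then ℓ₁ z.1 else ℓ₂ z.2, ?_, ?_, ?_⟩
    · rw [hEdge]
      apply glueOn (isClosed_Icc.prod isClosed_singleton) (isClosed_singleton.prod isClosed_Icc)
      · exact hc₁.comp continuous_fst.continuousOn (fun z hz => hz.1)
      · exact hc₂.comp continuous_snd.continuousOn (fun z hz => hz.2)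
      · intro z hz
        have hz1 : z.1 = 0 := hz.2.1
        have hz2 : z.2 = 0 := hz.1.2
        simp only [hz1, hz2, h0₁, h0₂]
    · intro z hz
      show p (if z ∈ Icc (0:ℝ) 1 ×ˢ ({0} : Set ℝ) then ℓ₁ z.1 else ℓ₂ z.2) = K z
      by_cases h : z ∈ Icc (0:ℝ) 1 ×ˢ ({0} : Set ℝ)
      · rw [if_pos h]
        have : z = (z.1, 0) := Prod.ext rfl h.2
        rw [this, hp₁ z.1 h.1]
      · rw [if_neg h]
        have hz' : z ∈ ({0} : Set ℝ) ×ˢ Icc (0:ℝ) 1 := hz.resolve_left h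
        have : z = (0, z.2) := Prod.ext hz'.1 rfl
        rw [this, hp₂ z.2 hz'.2]
    · show (if ((0:ℝ),(0:ℝ)) ∈ Icc (0:ℝ) 1 ×ˢ ({0} : Set ℝ) then ℓ₁ 0 else ℓ₂ 0) = e
      rw [if_pos ⟨⟨le_refl 0, zero_le_one⟩, rfl⟩]
      exact h0₁
  obtain ⟨L₀, hL₀c, hL₀p, hL₀e⟩ := edge_lift
  have antitone : ∀ {S S' : Set (ℝ × ℝ)}, S' ⊆ S →
      (∃ L : ℝ × ℝ → E, ContinuousOn L S ∧ (∀ z ∈ S, p (L z) = K z) ∧ L (0,0) = e) →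
      (∃ L : ℝ × ℝ → E, ContinuousOn L S' ∧ (∀ z ∈ S', p (L z) = K z) ∧ L (0,0) = e) :=
    fun hsub h => by
      obtain ⟨L, h1, h2, h3⟩ := h
      exact ⟨L, h1.mono hsub, fun z hz => h2 z (hsub hz), h3⟩
  have hCQ : ∀ j i : ℕ, C j i ∪ Qs j i = C j (i+1) := by
    intro j i
    simp only [hC, hQs]
    rw [← union_prod, Icc_union_Icc_eq_Icc (hu_nonneg i) (humono i)]
  have hRBC : ∀ j : ℕ, B j ∪ C j n = B (j+1) := by
    intro j
    simp only [hB, hC]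
    rw [hun, ← prod_union, Icc_union_Icc_eq_Icc (hu_nonneg j) (humono j)]
  have hBclosed : ∀ j : ℕ, IsClosed (B j) := fun j => isClosed_Icc.prod isClosed_Icc
  have hCclosed : ∀ j i : ℕ, IsClosed (C j i) := fun j i => isClosed_Icc.prod isClosed_Icc
  have hQclosed : ∀ j i : ℕ, IsClosed (Qs j i) := fun j i => isClosed_Icc.prod isClosed_Icc
  have hpre : ∀ j i : ℕ, i ≤ n → j ≤ n →
      IsPreconnected ((Edge ∪ B j ∪ C j i) ∩ Qs j i) ∧
        (u i, u j) ∈ (Edge ∪ B j ∪ C j i) ∩ Qs j i := by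
    intro j i hi hj
    have hz₀Q : (u i, u j) ∈ Qs j i := ⟨⟨le_refl _, humono i⟩, ⟨le_refl _, humono j⟩⟩
    have hz₀B : (u i, u j) ∈ B j := ⟨⟨hu_nonneg i, hu_le_one i hi⟩, ⟨hu_nonneg j, le_refl _⟩⟩
    have hstar : StarConvex ℝ (u i, u j) ((Edge ∪ B j ∪ C j i) ∩ Qs j i) := by
      simp only [hEdge, hB, hC, hQs]
      rw [union_inter_distrib_right, union_inter_distrib_right, union_inter_distrib_right,
        prod_inter_prod, prod_inter_prod, prod_inter_prod, prod_inter_prod]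
      refine StarConvex.union (StarConvex.union (StarConvex.union ?_ ?_) ?_) ?_
      · by_cases h : (0:ℝ) ∈ Icc (u j) (u (j+1))
        · have hj0 : u j = 0 := le_antisymm h.1 (hu_nonneg j)
          refine Convex.starConvex (((convex_Icc _ _).inter (convex_Icc _ _)).prod
            ((convex_singleton _).inter (convex_Icc _ _))) ?_
          exact ⟨⟨⟨hu_nonneg i, hu_le_one i hi⟩, ⟨le_refl _, humono i⟩⟩,
            ⟨mem_singleton_iff.mpr hj0, ⟨le_refl _, humono j⟩⟩⟩
        · rw [singleton_inter_eq_empty.mpr h, prod_empty]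
          exact starConvex_empty _
      · by_cases h : (0:ℝ) ∈ Icc (u i) (u (i+1))
        · have hi0 : u i = 0 := le_antisymm h.1 (hu_nonneg i)
          refine Convex.starConvex (((convex_singleton _).inter (convex_Icc _ _)).prod
            ((convex_Icc _ _).inter (convex_Icc _ _))) ?_
          exact ⟨⟨mem_singleton_iff.mpr hi0, ⟨le_refl _, humono i⟩⟩,
            ⟨⟨hu_nonneg j, hu_le_one j hj⟩, ⟨le_refl _, humono j⟩⟩⟩
        · rw [singleton_inter_eq_empty.mpr h, empty_prod]
          exact starConvex_empty _
      · refine Convex.starConvex (((convex_Icc _ _).inter (convex_Icc _ _)).prod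
          ((convex_Icc _ _).inter (convex_Icc _ _))) ?_
        exact ⟨⟨⟨hu_nonneg i, hu_le_one i hi⟩, ⟨le_refl _, humono i⟩⟩,
          ⟨⟨hu_nonneg j, le_refl _⟩, ⟨le_refl _, humono j⟩⟩⟩
      · refine Convex.starConvex (((convex_Icc _ _).inter (convex_Icc _ _)).prod
          ((convex_Icc _ _).inter (convex_Icc _ _))) ?_
        exact ⟨⟨⟨hu_nonneg i, le_refl _⟩, ⟨le_refl _, humono i⟩⟩,
          ⟨⟨le_refl _, humono j⟩, ⟨le_refl _, humono j⟩⟩⟩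
    refine ⟨isPreconnected_of_forall (u i, u j) (fun w hw =>
      ⟨segment ℝ (u i, u j) w, hstar.segment_subset hw, left_mem_segment _ _ _,
        right_mem_segment _ _ _, (convex_segment _ _).isPreconnected⟩),
      ⟨Or.inl (Or.inr hz₀B), hz₀Q⟩⟩
  have inner : ∀ j : ℕ, j < n →
      (∃ L, ContinuousOn L (Edge ∪ B j) ∧ (∀ z ∈ Edge ∪ B j, p (L z) = K z) ∧ L (0,0) = e) →
      ∀ i : ℕ, i ≤ n →
      ∃ L, ContinuousOn L (Edge ∪ B j ∪ C j i) ∧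
        (∀ z ∈ Edge ∪ B j ∪ C j i, p (L z) = K z) ∧ L (0,0) = e := by
    intro j hj hbase i
    induction i with
    | zero =>
      intro _
      apply antitone _ hbase
      apply union_subset subset_rfl
      intro z hz
      have hz1 : z.1 = 0 := le_antisymm (hu0 ▸ hz.1.2) hz.1.1
      exact Or.inl (Or.inr ⟨mem_singleton_iff.mpr hz1,
        ⟨le_trans (hu_nonneg j) hz.2.1, le_trans hz.2.2 (hu_le_one (j+1) hj)⟩⟩)
    | succ i ih =>
      intro hi1
      have hi : i < n := hi1
      obtain ⟨L, hLc, hLp, hLe⟩ := ih (Nat.le_of_succ_le hi1)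
      obtain ⟨L', hc', hp', heqn⟩ := hp.extend_lift (K := K)
        (S := Edge ∪ B j ∪ C j i) (Q := Qs j i)
        ((hEdgeClosed.union (hBclosed j)).union (hCclosed j i)) (hQclosed j i)
        (hpre j i hi.le hj.le).1 (hpre j i hi.le hj.le).2 hK (hsq j i hj hi) hLc hLp
      have hEq : (Edge ∪ B j ∪ C j i) ∪ Qs j i = Edge ∪ B j ∪ C j (i+1) := by
        rw [union_assoc (Edge ∪ B j), hCQ j i]
      rw [hEq] at hc' hp'
      exact ⟨L', hc', hp', by rw [heqn (Or.inl (Or.inl h00Edge))]; exact hLe⟩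
  have outer : ∀ j : ℕ, j ≤ n →
      ∃ L, ContinuousOn L (Edge ∪ B j) ∧ (∀ z ∈ Edge ∪ B j, p (L z) = K z) ∧ L (0,0) = e := by
    intro j
    induction j with
    | zero =>
      intro _
      apply antitone _ ⟨L₀, hL₀c, hL₀p, hL₀e⟩
      apply union_subset subset_rfl
      intro z hz
      exact Or.inl ⟨hz.1, mem_singleton_iff.mpr (le_antisymm (hu0 ▸ hz.2.2) hz.2.1)⟩
    | succ j ihj =>
      intro hj1
      have hj : j < n := hj1
      apply antitone _ (inner j hj (ihj hj.le) n le_rfl)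
      rw [← hRBC j, ← union_assoc]
  obtain ⟨L, h1, h2, h3⟩ := outer n le_rfl
  have hBn : B n = Icc (0:ℝ) 1 ×ˢ Icc (0:ℝ) 1 := by simp only [hB]; rw [hun]
  refine ⟨L, h1.mono (fun z hz => Or.inr (hBn ▸ hz)), fun z hz => h2 z (Or.inr (hBn ▸ hz)), h3⟩

end Square

section Monodromy

variable {E X : Type*} [TopologicalSpace E] [TopologicalSpace X] {p : E → X}

theorem IsCoveringMap.path_lift' (hp : IsCoveringMap p) {x y : X} (γ : Path x y) (e : E)
    (he : p e = x) :
    ∃ d : unitInterval → E, Continuous d ∧ (∀ t, p (d t) = γ t) ∧ d 0 = e := by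
  obtain ⟨L, hLc, hLp, hLe⟩ := hp.square_lift (K := fun z : ℝ × ℝ => γ.extend z.2)
    (γ.continuous_extend.comp continuous_snd) e (by show p e = γ.extend 0; rwa [Path.extend_zero])
  have I01 : (0:ℝ) ∈ Icc (0:ℝ) 1 := ⟨le_refl 0, zero_le_one⟩
  refine ⟨fun t => L (0, t), ?_, ?_, ?_⟩
  · exact hLc.comp_continuous (continuous_const.prodMk continuous_subtype_val)
      (fun t => ⟨I01, t.2⟩)
  · intro t
    rw [hLp (0, t) ⟨I01, t.2⟩]
    exact γ.extend_extends' t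
  · show L (0, ((0 : unitInterval) : ℝ)) = e
    exact hLe

theorem IsCoveringMap.monodromy' (hp : IsCoveringMap p) {x y : X} {γ₀ γ₁ : Path x y}
    (h : γ₀.Homotopic γ₁) {e : E} {d₀ d₁ : unitInterval → E}
    (hc₀ : Continuous d₀) (hc₁ : Continuous d₁)
    (hl₀ : ∀ t, p (d₀ t) = γ₀ t) (hl₁ : ∀ t, p (d₁ t) = γ₁ t)
    (h₀ : d₀ 0 = e) (h₁ : d₁ 0 = e) : d₀ 1 = d₁ 1 := by
  obtain ⟨H⟩ := h
  have hq0 : Set.projIcc (0:ℝ) 1 zero_le_one 0 = 0 := Set.projIcc_left zero_le_one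
  have hq1 : Set.projIcc (0:ℝ) 1 zero_le_one 1 = 1 := Set.projIcc_right zero_le_one
  have hqt : ∀ t : unitInterval, Set.projIcc (0:ℝ) 1 zero_le_one ↑t = t :=
    fun t => Set.projIcc_val zero_le_one t
  set K : ℝ × ℝ → X := fun z =>
    H (Set.projIcc 0 1 zero_le_one z.1, Set.projIcc 0 1 zero_le_one z.2) with hKdef
  have hKc : Continuous K := H.continuous.comp
    ((continuous_projIcc.comp continuous_fst).prodMk (continuous_projIcc.comp continuous_snd))
  have hpe : p e = x := by rw [← h₀, hl₀ 0, γ₀.source]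
  have I01 : (0:ℝ) ∈ Icc (0:ℝ) 1 := ⟨le_refl 0, zero_le_one⟩
  have I11 : (1:ℝ) ∈ Icc (0:ℝ) 1 := ⟨zero_le_one, le_refl 1⟩
  have hKt0 : ∀ t : unitInterval, K (↑t, 0) = x := fun t => by
    show H (_, _) = x
    rw [hqt, hq0]
    exact H.source t
  have hKt1 : ∀ t : unitInterval, K (↑t, 1) = y := fun t => by
    show H (_, _) = y
    rw [hqt, hq1]
    exact H.target t
  have hK0t : ∀ t : unitInterval, K (0, ↑t) = γ₀ t := fun t => by
    show H (_, _) = γ₀ t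
    rw [hqt, hq0]
    exact H.apply_zero t
  have hK1t : ∀ t : unitInterval, K (1, ↑t) = γ₁ t := fun t => by
    show H (_, _) = γ₁ t
    rw [hqt, hq1]
    exact H.apply_one t
  have hK01 : K ((0:ℝ), (1:ℝ)) = y := by
    have h' := hK0t 1
    rw [show ((1:unitInterval):ℝ) = (1:ℝ) from rfl, γ₀.target] at h'
    exact h'
  obtain ⟨L, hLc, hLp, hLe⟩ := hp.square_lift hKc e
    (by rw [show ((0:ℝ), (0:ℝ)) = (((0:unitInterval) : ℝ), (0:ℝ)) from rfl, hKt0]; exact hpe)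
  -- bottom edge is constant
  have hbot : ∀ t : unitInterval, L (↑t, 0) = e := by
    have heq := hp.eq_of_comp_eq (g₁ := fun t : unitInterval => L (↑t, 0))
      (g₂ := fun _ : unitInterval => e)
      (hLc.comp_continuous (continuous_subtype_val.prodMk continuous_const)
        (fun t => ⟨t.2, I01⟩))
      continuous_const
      (funext fun t => by
        show p (L (↑t, 0)) = p e
        rw [hLp _ ⟨t.2, I01⟩, hKt0, hpe]) 0 (by show L (_, _) = e; exact hLe)
    exact fun t => congrFun heq t
  -- left edge equals d₀
  have hleft := hp.eq_of_comp_eq (g₁ := fun t : unitInterval => L (0, ↑t)) (g₂ := d₀)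
    (hLc.comp_continuous (continuous_const.prodMk continuous_subtype_val)
      (fun t => ⟨I01, t.2⟩))
    hc₀
    (funext fun t => by
      show p (L (0, ↑t)) = p (d₀ t)
      rw [hLp _ ⟨I01, t.2⟩, hK0t, hl₀]) 0
    (by show L (_, _) = d₀ 0; rw [h₀]; exact hLe)
  -- right edge equals d₁
  have hright := hp.eq_of_comp_eq (g₁ := fun t : unitInterval => L (1, ↑t)) (g₂ := d₁)
    (hLc.comp_continuous (continuous_const.prodMk continuous_subtype_val)
      (fun t => ⟨I11, t.2⟩))
    hc₁
    (funext fun t => by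
      show p (L (1, ↑t)) = p (d₁ t)
      rw [hLp _ ⟨I11, t.2⟩, hK1t, hl₁]) 0
    (by
      show L (1, ((0:unitInterval):ℝ)) = d₁ 0
      rw [h₁, show ((0:unitInterval):ℝ) = (0:ℝ) from rfl,
        show ((1:ℝ), (0:ℝ)) = (((1:unitInterval):ℝ), (0:ℝ)) from rfl]
      exact hbot 1)
  -- top edge is constant
  have htop := hp.eq_of_comp_eq (g₁ := fun t : unitInterval => L (↑t, 1))
    (g₂ := fun _ : unitInterval => L ((0:ℝ), (1:ℝ)))
    (hLc.comp_continuous (continuous_subtype_val.prodMk continuous_const)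
      (fun t => ⟨t.2, I11⟩))
    continuous_const
    (funext fun t => by
      show p (L (↑t, 1)) = p (L ((0:ℝ), (1:ℝ)))
      rw [hLp _ ⟨t.2, I11⟩, hKt1, hLp _ ⟨I01, I11⟩, hK01]) 0
    (by show L (((0:unitInterval):ℝ), (1:ℝ)) = L ((0:ℝ), (1:ℝ)); rfl)
  have e₀ : L ((0:ℝ), (1:ℝ)) = d₀ 1 := by
    have := congrFun hleft 1
    rwa [show ((1:unitInterval):ℝ) = (1:ℝ) from rfl] at this
  have e₁ : L ((1:ℝ), (1:ℝ)) = d₁ 1 := by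
    have := congrFun hright 1
    rwa [show ((1:unitInterval):ℝ) = (1:ℝ) from rfl] at this
  have etop : L ((1:ℝ), (1:ℝ)) = L ((0:ℝ), (1:ℝ)) := by
    have := congrFun htop 1
    rwa [show ((1:unitInterval):ℝ) = (1:ℝ) from rfl] at this
  rw [← e₀, ← etop, e₁]

end Monodromy

/-- The map on fundamental groups `π₁(X, x) → π₁(Y, f x)` induced by a continuous map
`f : X → Y` is surjective: every loop at `f x` is path-homotopic to the image under `f`
of a loop at `x`. -/
def InducedPi1Surjective {X Y : Type*} [TopologicalSpace X] [TopologicalSpace Y]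
    (f : X → Y) (hf : Continuous f) (x : X) : Prop :=
  ∀ γ : Path (f x) (f x), ∃ δ : Path x x, (δ.map hf).Homotopic γ

/-- Let `p : G̃ → G` be a continuous surjective homomorphism of topological
groups which is a covering map, `G̃` path connected and simply connected, `G` path connected.
Let `H ≤ G` be a path-connected subgroup whose inclusion induces a surjection
`π₁(H,1) → π₁(G,1)`, and let `H̃` be the path component of the identity in `p⁻¹(H)`
(membership in `H̃` is expressed by `JoinedIn (p⁻¹(H)) 1 ·`).  Suppose `G̃` acts continuously
on a space `F` and every element of `ker p ∩ H̃` acts as the identity on `F`.  Then every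
element of `ker p` acts as the identity on `F`, and there is a unique continuous action of
`G` on `F` with `g̃ • x = p(g̃) • x`. -/
theorem stmt5 {Gt G F : Type*} [TopologicalSpace Gt] [Group Gt] [IsTopologicalGroup Gt]
    [TopologicalSpace G] [Group G] [IsTopologicalGroup G]
    [PathConnectedSpace Gt] [SimplyConnectedSpace Gt] [PathConnectedSpace G]
    (p : Gt →* G) (hpcont : Continuous p) (hpsurj : Function.Surjective p)
    (hpcov : IsCoveringMap (⇑p))
    (H : Subgroup G) (hHpc : IsPathConnected (H : Set G))
    (hsurj : InducedPi1Surjective (Subtype.val : H → G) continuous_subtype_val (1 : H))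
    [TopologicalSpace F] [MulAction Gt F] [ContinuousSMul Gt F]
    (htriv : ∀ n : Gt, n ∈ p.ker → JoinedIn ((⇑p) ⁻¹' (H : Set G)) 1 n →
      ∀ x : F, n • x = x) :
    (∀ n ∈ p.ker, ∀ x : F, n • x = x) ∧
    (∃! act : G → F → F,
      Continuous (fun gx : G × F => act gx.1 gx.2) ∧
      (∀ x : F, act 1 x = x) ∧
      (∀ g g' : G, ∀ x : F, act (g * g') x = act g (act g' x)) ∧
      (∀ gt : Gt, ∀ x : F, act (p gt) x = gt • x)) := by
  have part1 : ∀ n ∈ p.ker, ∀ x : F, n • x = x := by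
    intro n hn x
    refine htriv n hn ?_ x
    obtain ⟨α⟩ : Joined (1 : Gt) n := PathConnectedSpace.joined 1 n
    have hp1 : ((1:H) : G) = p 1 := by rw [map_one]; exact OneMemClass.coe_one H
    have hpn : ((1:H) : G) = p n := by
      rw [MonoidHom.mem_ker] at hn
      rw [hn]
      exact OneMemClass.coe_one H
    set loopG : Path ((1:H) : G) ((1:H) : G) := (α.map hpcont).cast hp1 hpn with hloopG
    obtain ⟨δ, hδ⟩ := hsurj loopG
    set δG : Path ((1:H) : G) ((1:H) : G) := δ.map continuous_subtype_val with hδG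
    obtain ⟨d, hdc, hdp, hd0⟩ := hpcov.path_lift' δG 1
      (by rw [map_one]; exact (OneMemClass.coe_one H).symm)
    have hl₁ : ∀ t, p (α t) = loopG t := fun t => by
      rw [hloopG, Path.cast_coe]
      rfl
    have hend : d 1 = n := by
      have := hpcov.monodromy' (γ₀ := δG) (γ₁ := loopG) (e := (1:Gt)) hδ hdc α.continuous_toFun
        hdp hl₁ hd0 α.source
      exact this.trans α.target
    refine ⟨⟨⟨d, hdc⟩, hd0, hend⟩, fun t => ?_⟩
    show p (d t) ∈ (H : Set G)
    rw [hdp t]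
    exact (δ t).2
  refine ⟨part1, ?_⟩
  have hwd : ∀ (a b : Gt) (x : F), p a = p b → a • x = b • x := by
    intro a b x hab
    have hker : b * a⁻¹ ∈ p.ker := by
      rw [MonoidHom.mem_ker, map_mul, map_inv, hab, mul_inv_cancel]
    have h2 := part1 _ hker (a • x)
    rw [smul_smul, inv_mul_cancel_right] at h2
    exact h2.symm
  set act : G → F → F := fun g x => (hpsurj g).choose • x with hactdef
  have hact' : ∀ (g : G) (ht : Gt) (x : F), p ht = g → act g x = ht • x := fun g ht x hgt =>
    hwd _ _ x (by rw [(hpsurj g).choose_spec, hgt])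
  have hq : IsQuotientMap (Prod.map ⇑p (id : F → F)) :=
    (hpcov.isOpenMap.prodMap IsOpenMap.id).isQuotientMap (hpcont.prodMap continuous_id)
      (hpsurj.prodMap Function.surjective_id)
  have hcont : Continuous (fun gx : G × F => act gx.1 gx.2) := by
    rw [hq.continuous_iff]
    have heq : (fun gx : G × F => act gx.1 gx.2) ∘ (Prod.map ⇑p id) =
        fun gx : Gt × F => gx.1 • gx.2 := by
      funext gx
      exact hact' (p gx.1) gx.1 gx.2 rfl
    rw [heq]
    exact continuous_smul
  refine ⟨act, ⟨hcont, ?_, ?_, ?_⟩, ?_⟩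
  · intro x
    rw [hact' 1 1 x (map_one p), one_smul]
  · intro g g' x
    obtain ⟨a, ha⟩ := hpsurj g
    obtain ⟨b, hb⟩ := hpsurj g'
    rw [hact' (g * g') (a * b) x (by rw [map_mul, ha, hb]), hact' g' b x hb,
      hact' g a (b • x) ha, mul_smul]
  · intro gt x
    exact hact' (p gt) gt x rfl
  · rintro act' ⟨-, -, -, h4'⟩
    funext g x
    obtain ⟨a, rfl⟩ := hpsurj g
    rw [h4', hact' (p a) a x rfl]
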